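/- There exist a complete lattice L and two DISTINCT maps h ≠ h' : DI(L) → DI(L), each preserving arbitrary suprema of distributive ideals and each satisfying the compatibility condition (sSup A = sSup B ⟹ sSup of the image ideals are equal), such that sSup (h(A)) = sSup (h'(A)) for every A ∈ DI(L). (Hence the functor G, which sends such a map h to the induced suprema-preserving map on L, is not faithful.) -/

import Mathlib

/-- A subset `S` of a complete lattice is *distributive* if
`a ⊓ sSup S = ⨆ s ∈ S, a ⊓ s` for every `a`. -/
def IsDistrib {L : Type*} [CompleteLattice L] (S : Set L) : Prop :=
  ∀ a : L, a ⊓ sSup S = ⨆ s ∈ S, a ⊓ s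

/-- A *distributive ideal* is a lower set closed under suprema of its
distributive subsets. -/
def IsDistribIdeal {L : Type*} [CompleteLattice L] (I : Set L) : Prop :=
  IsLowerSet I ∧ ∀ S : Set L, S ⊆ I → IsDistrib S → sSup S ∈ I

/-- The lower set `↓A` generated by `A`. -/
def downSet {L : Type*} [CompleteLattice L] (A : Set L) : Set L :=
  {x | ∃ a ∈ A, x ≤ a}

/-- The closure `𝒞(A) = { sSup B | B ⊆ ↓A, B distributive }`. -/
def distClosure {L : Type*} [CompleteLattice L] (A : Set L) : Set L :=
  {x | ∃ B : Set L, B ⊆ downSet A ∧ IsDistrib B ∧ x = sSup B}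

/-- The properties required of each of the two maps in Statement 18: `h` sends
distributive ideals to distributive ideals, preserves arbitrary suprema of
distributive ideals, and is compatible with `sSup`. -/
def IsDIMorphism (L : Type) [CompleteLattice L] (h : Set L → Set L) : Prop :=
  (∀ A : Set L, IsDistribIdeal A → IsDistribIdeal (h A)) ∧
  (∀ 𝒜 : Set (Set L), (∀ A ∈ 𝒜, IsDistribIdeal A) →
    h (distClosure (⋃₀ 𝒜)) = distClosure (⋃ A ∈ 𝒜, h A)) ∧
  (∀ A B : Set L, IsDistribIdeal A → IsDistribIdeal B → sSup A = sSup B →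
    sSup (h A) = sSup (h B))

/-- The full existential content of Statement 18: two maps on `DI(L)`, each a
morphism as above, which agree after applying `sSup` everywhere but differ on
some distributive ideal. Hence the functor `G` is not faithful. -/
def NotFaithfulWitness (L : Type) [CompleteLattice L]
    (h h' : Set L → Set L) : Prop :=
  IsDIMorphism L h ∧ IsDIMorphism L h' ∧
  (∀ A : Set L, IsDistribIdeal A → sSup (h A) = sSup (h' A)) ∧
  (∃ A : Set L, IsDistribIdeal A ∧ h A ≠ h' A)

/-! ### The lattice M₃ -/

inductive M3 : Type
  | o | a | b | c | t
  deriving DecidableEq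

instance : Fintype M3 where
  elems := {M3.o, M3.a, M3.b, M3.c, M3.t}
  complete := by intro x; cases x <;> simp

namespace M3

def ble : M3 → M3 → Bool := fun x y => x = y || x = o || y = t

instance : LE M3 := ⟨fun x y => ble x y = true⟩

instance : DecidableRel ((· ≤ ·) : M3 → M3 → Prop) := fun x y =>
  inferInstanceAs (Decidable (ble x y = true))

instance : Lattice M3 where
  le := (· ≤ ·)
  le_refl := by decide
  le_trans := by decide
  le_antisymm := by decide
  sup x y := if ble x y then y else if ble y x then x else t
  le_sup_left := by decide
  le_sup_right := by decide
  sup_le := by decide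
  inf x y := if ble x y then x else if ble y x then y else o
  inf_le_left := by decide
  inf_le_right := by decide
  le_inf := by decide

instance : BoundedOrder M3 where
  top := t
  le_top := by decide
  bot := o
  bot_le := by decide

noncomputable instance : CompleteLattice M3 := Fintype.toCompleteLattice M3

lemma bot_def : (⊥ : M3) = o := by decide

/-! ### generic lemmas about distClosure -/

section generic
variable {L : Type*} [CompleteLattice L]

lemma isDistrib_empty : IsDistrib (∅ : Set L) := by
  intro x; simp

lemma isDistrib_singleton (s : L) : IsDistrib ({s} : Set L) := by
  intro x; simp

lemma subset_distClosure (S : Set L) : S ⊆ distClosure S := by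
  intro s hs
  exact ⟨{s}, by intro x hx; exact ⟨s, hs, by simp_all⟩, isDistrib_singleton s,
    (sSup_singleton).symm⟩

lemma bot_mem_distClosure (S : Set L) : (⊥ : L) ∈ distClosure S :=
  ⟨∅, Set.empty_subset _, isDistrib_empty, sSup_empty.symm⟩

lemma distClosure_bound {S : Set L} {v : L} (h : ∀ x ∈ S, x ≤ v) :
    ∀ y ∈ distClosure S, y ≤ v := by
  rintro y ⟨B, hB, -, rfl⟩
  refine sSup_le fun x hx => ?_
  obtain ⟨s, hsS, hxs⟩ := hB hx
  exact hxs.trans (h s hsS)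

lemma distClosure_univ : distClosure (Set.univ : Set L) = Set.univ :=
  Set.eq_univ_of_univ_subset (subset_distClosure _)

end generic

/-! ### specific computations in M3 -/

lemma subset_bot_iff (A : Set M3) : A ⊆ {o} ↔ sSup A = ⊥ := by
  constructor
  · intro h
    refine le_bot_iff.mp (sSup_le fun x hx => ?_)
    have := h hx
    simp only [Set.mem_singleton_iff] at this
    subst this; exact bot_def ▸ le_refl _
  · intro h x hx
    have := le_sSup hx
    rw [h, le_bot_iff] at this
    simp [this, bot_def.symm]

lemma distClosure_subbot {S : Set M3} (h : S ⊆ {o}) : distClosure S = {o} := by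
  have hb : ∀ y ∈ S, y ≤ (⊥ : M3) := by
    intro y hy
    have := h hy
    simp only [Set.mem_singleton_iff] at this
    subst this
    exact bot_def ▸ le_refl _
  ext x
  constructor
  · intro hx
    have := distClosure_bound hb x hx
    simp [le_bot_iff.mp this, bot_def.symm]
  · intro hx
    simp only [Set.mem_singleton_iff] at hx
    subst hx
    exact bot_def ▸ bot_mem_distClosure S

lemma not_distrib_bc {B : Set M3} (hB : ∀ s ∈ B, s = o ∨ s = b ∨ s = c)
    (hb : b ∈ B) (hc : c ∈ B) : ¬ IsDistrib B := by
  intro hD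
  have h1 : sSup B = t := le_antisymm
    (by have : sSup B ≤ ⊤ := le_top; simpa [show (⊤ : M3) = t by decide] using this)
    (by calc (t : M3) = b ⊔ c := by decide
          _ ≤ sSup B := sup_le (le_sSup hb) (le_sSup hc))
  have h2 := hD a
  rw [h1] at h2
  have h3 : (⨆ s ∈ B, a ⊓ s) ≤ ⊥ := by
    refine iSup₂_le fun s hs => ?_
    rcases hB s hs with h | h | h <;> subst h <;> decide
  rw [← h2] at h3
  revert h3; decide

lemma sSup_obc_mem {S : Set M3} (hS : ∀ x ∈ S, x = o ∨ x = b ∨ x = c)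
    (hD : IsDistrib S) : sSup S = o ∨ sSup S = b ∨ sSup S = c := by
  by_cases hb : b ∈ S
  · by_cases hc : c ∈ S
    · exact absurd hD (not_distrib_bc hS hb hc)
    · have : sSup S ≤ b := sSup_le fun x hx => by
        rcases hS x hx with h | h | h
        · subst h; decide
        · subst h; decide
        · exact absurd (h ▸ hx) hc
      have key : ∀ y : M3, y ≤ b → (y = o ∨ y = b ∨ y = c) := by decide
      exact key _ this
  · have : sSup S ≤ c := sSup_le fun x hx => by
      rcases hS x hx with h | h | h
      · subst h; decide
      · exact absurd (h ▸ hx) hb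
      · subst h; decide
    have key : ∀ y : M3, y ≤ c → (y = o ∨ y = b ∨ y = c) := by decide
    exact key _ this

lemma mem_obc_iff (x : M3) : x ∈ ({o, b, c} : Set M3) ↔ (x = o ∨ x = b ∨ x = c) := by
  simp [Set.mem_insert_iff]

lemma le_a_iff : ∀ x : M3, x ≤ a ↔ (x = o ∨ x = a) := by decide

lemma mem_oa_iff (x : M3) : x ∈ ({o, a} : Set M3) ↔ x ≤ a := by
  simp [Set.mem_insert_iff, le_a_iff]

lemma down_obc : ∀ s u : M3, s ≤ u → (u = o ∨ u = b ∨ u = c) →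
    (s = o ∨ s = b ∨ s = c) := by decide

lemma distClosure_obc : distClosure ({o, b, c} : Set M3) = {o, b, c} := by
  refine le_antisymm ?_ (subset_distClosure _)
  rintro x ⟨B, hB, hD, rfl⟩
  have hB' : ∀ s ∈ B, s = o ∨ s = b ∨ s = c := by
    intro s hs
    obtain ⟨u, hu, hsu⟩ := hB hs
    exact down_obc s u hsu ((mem_obc_iff u).mp hu)
  exact (mem_obc_iff _).mpr (sSup_obc_mem hB' hD)

lemma sSup_obc : sSup ({o, b, c} : Set M3) = ⊤ := by
  refine le_antisymm le_top ?_
  calc (⊤ : M3) = b ⊔ c := by decide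
    _ ≤ sSup ({o, b, c} : Set M3) :=
        sup_le (le_sSup (by simp)) (le_sSup (by simp))

lemma DI_bot : IsDistribIdeal ({o} : Set M3) := by
  constructor
  · intro x y hyx hx
    simp only [Set.mem_singleton_iff] at hx ⊢
    subst hx
    have : y ≤ (⊥ : M3) := bot_def ▸ hyx
    simpa [bot_def.symm] using le_bot_iff.mp this
  · intro S hS _
    have := (subset_bot_iff S).mp hS
    simp [this, bot_def.symm]

lemma DI_univ : IsDistribIdeal (Set.univ : Set M3) :=
  ⟨fun _ _ _ _ => trivial, fun _ _ _ => trivial⟩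

lemma DI_obc : IsDistribIdeal ({o, b, c} : Set M3) := by
  constructor
  · intro x y hyx hx
    exact (mem_obc_iff _).mpr (down_obc y x hyx ((mem_obc_iff _).mp hx))
  · intro S hS hD
    exact (mem_obc_iff _).mpr
      (sSup_obc_mem (fun x hx => (mem_obc_iff x).mp (hS hx)) hD)

lemma DI_oa : IsDistribIdeal ({o, a} : Set M3) := by
  constructor
  · intro x y hyx hx
    exact (mem_oa_iff _).mpr (hyx.trans ((mem_oa_iff _).mp hx))
  · intro S hS _
    exact (mem_oa_iff _).mpr (sSup_le fun x hx => (mem_oa_iff x).mp (hS hx))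

/-! ### The two maps -/

open Classical in
noncomputable def hmap : Set M3 → Set M3 := fun A =>
  if A ⊆ {o} then {o} else Set.univ

open Classical in
noncomputable def hmap' : Set M3 → Set M3 := fun A =>
  if A ⊆ {o} then {o} else if A ⊆ {o, a} then {o, b, c} else Set.univ

open Classical in
lemma sSup_hmap (A : Set M3) :
    sSup (hmap A) = if A ⊆ {o} then (⊥ : M3) else ⊤ := by
  unfold hmap
  split_ifs
  · simp [bot_def]
  · exact sSup_univ

open Classical in
lemma sSup_hmap' (A : Set M3) :
    sSup (hmap' A) = if A ⊆ {o} then (⊥ : M3) else ⊤ := by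
  unfold hmap'
  split_ifs
  · simp [bot_def]
  · exact sSup_obc
  · exact sSup_univ

lemma sSup_congr_cond {A B : Set M3} (h : sSup A = sSup B) :
    (A ⊆ {o}) ↔ (B ⊆ {o}) := by
  rw [subset_bot_iff, subset_bot_iff, h]

lemma hmap_morphism : IsDIMorphism M3 hmap := by
  refine ⟨?_, ?_, ?_⟩
  · intro A _
    unfold hmap
    split_ifs
    · exact DI_bot
    · exact DI_univ
  · intro 𝒜 _
    by_cases hU : ⋃₀ 𝒜 ⊆ {o}
    · rw [distClosure_subbot hU]
      have h1 : hmap {o} = {o} := if_pos (subset_refl _)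
      have h2 : (⋃ A ∈ 𝒜, hmap A) ⊆ {o} := by
        rintro x hx
        simp only [Set.mem_iUnion] at hx
        obtain ⟨A, hA, hxA⟩ := hx
        have : A ⊆ {o} := fun y hy => hU ⟨A, hA, hy⟩
        rwa [hmap, if_pos this] at hxA
      rw [h1, distClosure_subbot h2]
    · obtain ⟨w, hw, hw'⟩ := Set.not_subset.mp hU
      obtain ⟨A₀, hA₀, hwA₀⟩ := hw
      have hC : ¬ distClosure (⋃₀ 𝒜) ⊆ {o} := fun h =>
        hw' (h (subset_distClosure _ ⟨A₀, hA₀, hwA₀⟩))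
      have hA₀n : ¬ A₀ ⊆ {o} := fun h => hw' (h hwA₀)
      have h2 : (⋃ A ∈ 𝒜, hmap A) = Set.univ := by
        refine Set.eq_univ_of_univ_subset fun x _ => ?_
        simp only [Set.mem_iUnion]
        exact ⟨A₀, hA₀, by rw [hmap, if_neg hA₀n]; trivial⟩
      rw [hmap, if_neg hC, h2, distClosure_univ]
  · intro A B _ _ hAB
    rw [sSup_hmap, sSup_hmap]
    by_cases hA : A ⊆ {o}
    · rw [if_pos hA, if_pos ((sSup_congr_cond hAB).mp hA)]
    · rw [if_neg hA, if_neg (fun hB => hA ((sSup_congr_cond hAB).mpr hB))]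

lemma hmap'_morphism : IsDIMorphism M3 hmap' := by
  refine ⟨?_, ?_, ?_⟩
  · intro A _
    unfold hmap'
    split_ifs
    · exact DI_bot
    · exact DI_obc
    · exact DI_univ
  · intro 𝒜 _
    by_cases hU : ⋃₀ 𝒜 ⊆ {o}
    · rw [distClosure_subbot hU]
      have h1 : hmap' {o} = {o} := if_pos (subset_refl _)
      have h2 : (⋃ A ∈ 𝒜, hmap' A) ⊆ {o} := by
        rintro x hx
        simp only [Set.mem_iUnion] at hx
        obtain ⟨A, hA, hxA⟩ := hx
        have : A ⊆ {o} := fun y hy => hU ⟨A, hA, hy⟩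
        rwa [hmap', if_pos this] at hxA
      rw [h1, distClosure_subbot h2]
    · obtain ⟨w, hw, hw'⟩ := Set.not_subset.mp hU
      obtain ⟨A₀, hA₀, hwA₀⟩ := hw
      have hC1 : ¬ distClosure (⋃₀ 𝒜) ⊆ {o} := fun h =>
        hw' (h (subset_distClosure _ ⟨A₀, hA₀, hwA₀⟩))
      by_cases hUa : ⋃₀ 𝒜 ⊆ {o, a}
      · -- middle case
        have hC2 : distClosure (⋃₀ 𝒜) ⊆ {o, a} := by
          intro y hy
          refine (mem_oa_iff y).mpr ?_
          exact distClosure_bound (fun x hx => (mem_oa_iff x).mp (hUa hx)) y hy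
        have hA₀a : A₀ ⊆ {o, a} := fun y hy => hUa ⟨A₀, hA₀, hy⟩
        have hA₀n : ¬ A₀ ⊆ {o} := fun h => hw' (h hwA₀)
        have h2 : (⋃ A ∈ 𝒜, hmap' A) = {o, b, c} := by
          apply le_antisymm
          · rintro x hx
            simp only [Set.mem_iUnion] at hx
            obtain ⟨A, hA, hxA⟩ := hx
            have hAa : A ⊆ {o, a} := fun y hy => hUa ⟨A, hA, hy⟩
            by_cases hAo : A ⊆ {o}
            · rw [hmap', if_pos hAo] at hxA
              simp only [Set.mem_singleton_iff] at hxA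
              subst hxA
              simp
            · rwa [hmap', if_neg hAo, if_pos hAa] at hxA
          · intro y hy
            simp only [Set.mem_iUnion]
            exact ⟨A₀, hA₀, by rwa [hmap', if_neg hA₀n, if_pos hA₀a]⟩
        rw [hmap', if_neg hC1, if_pos hC2, h2, distClosure_obc]
      · obtain ⟨v, hv, hv'⟩ := Set.not_subset.mp hUa
        obtain ⟨A₁, hA₁, hvA₁⟩ := hv
        have hC2 : ¬ distClosure (⋃₀ 𝒜) ⊆ {o, a} := fun h =>
          hv' (h (subset_distClosure _ ⟨A₁, hA₁, hvA₁⟩))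
        have hA₁a : ¬ A₁ ⊆ {o, a} := fun h => hv' (h hvA₁)
        have hA₁o : ¬ A₁ ⊆ {o} := fun h =>
          hA₁a (h.trans (by intro y hy; simp_all [Set.mem_insert_iff]))
        have h2 : (⋃ A ∈ 𝒜, hmap' A) = Set.univ := by
          refine Set.eq_univ_of_univ_subset fun x _ => ?_
          simp only [Set.mem_iUnion]
          exact ⟨A₁, hA₁, by rw [hmap', if_neg hA₁o, if_neg hA₁a]; trivial⟩
        rw [hmap', if_neg hC1, if_neg hC2, h2, distClosure_univ]
  · intro A B _ _ hAB
    rw [sSup_hmap', sSup_hmap']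
    by_cases hA : A ⊆ {o}
    · rw [if_pos hA, if_pos ((sSup_congr_cond hAB).mp hA)]
    · rw [if_neg hA, if_neg (fun hB => hA ((sSup_congr_cond hAB).mpr hB))]

end M3


/-- There exist a complete lattice `L` and two distinct suprema-preserving,
`sSup`-compatible maps `DI(L) → DI(L)` inducing the same map on `L`:
the functor `G` is not faithful. -/
theorem G_not_faithful :
    ∃ (L : Type) (inst : CompleteLattice L) (h h' : Set L → Set L),
      @NotFaithfulWitness L inst h h' := by
  refine ⟨M3, inferInstance, M3.hmap, M3.hmap', M3.hmap_morphism, M3.hmap'_morphism,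
    fun A _ => by rw [M3.sSup_hmap, M3.sSup_hmap'], ⟨{M3.o, M3.a}, M3.DI_oa, ?_⟩⟩
  have h1 : ¬ ({M3.o, M3.a} : Set M3) ⊆ {M3.o} := by
    intro h
    have := h (show M3.a ∈ ({M3.o, M3.a} : Set M3) by simp)
    simp only [Set.mem_singleton_iff] at this
    exact absurd this (by decide)
  rw [M3.hmap, if_neg h1, M3.hmap', if_neg h1, if_pos (subset_refl _)]
  intro heq
  have : M3.a ∈ ({M3.o, M3.b, M3.c} : Set M3) := heq ▸ Set.mem_univ _
  rw [M3.mem_obc_iff] at this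
  exact absurd this (by decide)
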